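/- Let g be a Lie algebra, f: g → gl(V) a representation, and q: g → V a bijective linear map satisfying the 1-cocycle condition q([x,y]) = f(x)q(y) − f(y)q(x) for all x, y ∈ g. Then the product x·y := q⁻¹(f(x)q(y)) defines a left-symmetric algebra structure on g whose associated Lie bracket x·y − y·x coincides with the original bracket [x,y]. -/

import Mathlib

attribute [local instance 100] LieRing.ofAssociativeRing

/-- A bijective 1-cocycle `(f, q)` on a Lie algebra `g` yields a left-symmetric product
`x·y = q⁻¹(f(x)(q(y)))` whose commutator recovers the Lie bracket. -/
theorem bijective_one_cocycle_gives_lsa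
    (K g V : Type*) [Field K] [LieRing g] [LieAlgebra K g]
    [AddCommGroup V] [Module K V]
    (f : g →ₗ⁅K⁆ Module.End K V)
    (q : g ≃ₗ[K] V)
    (hq : ∀ x y : g, q ⁅x, y⁆ = f x (q y) - f y (q x)) :
    (∀ x y z : g,
      q.symm (f (q.symm (f x (q y))) (q (z))) - q.symm (f x (q (q.symm (f y (q z)))))
        = q.symm (f (q.symm (f y (q x))) (q z)) - q.symm (f y (q (q.symm (f x (q z))))))
    ∧ (∀ x y : g, q.symm (f x (q y)) - q.symm (f y (q x)) = ⁅x, y⁆) := by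
  have hcomm : ∀ x y : g, q.symm (f x (q y)) - q.symm (f y (q x)) = ⁅x, y⁆ := by
    intro x y
    apply q.injective
    simp [map_sub, hq]
  refine ⟨fun x y z => ?_, hcomm⟩
  apply q.injective
  simp only [map_sub, q.apply_symm_apply]
  have h1 : f (q.symm (f x (q y)) - q.symm (f y (q x))) (q z) = f ⁅x, y⁆ (q z) := by
    rw [hcomm]
  rw [map_sub] at h1
  have h2 : f ⁅x, y⁆ (q z) = f x (f y (q z)) - f y (f x (q z)) := by
    rw [LieHom.map_lie, Ring.lie_def]
    rfl
  simp only [LinearMap.sub_apply] at h1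
  rw [h2] at h1
  linear_combination (norm := abel) h1
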